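/- arXiv:2202.10161 — 2 statements merged into one kernel-verified Lean document; each statement's English description precedes it below -/
import Mathlib

section
/- Let A = [[Ψ, B],[−Bᵀ, 0]] ∈ ℂ^{2n×2n} with Ψ, B ∈ ℝ^{n×n}, and let λ ∈ ℂ be an eigenvalue with eigenvector (v,w), v ≠ 0. Write Ψ = Ψ_s + Ψ_a with Ψ_s := (Ψ+Ψᵀ)/2 and Ψ_a := (Ψ−Ψᵀ)/2. Then (Re λ − p_r)² + (Im λ − p_i)² = r², where p_r := v*Ψ_s v/‖v‖², p_i := −i·v*Ψ_a v/‖v‖² (a real number), and r² := (‖Bw‖² − ‖Ψv‖²)/‖v‖² + p_r² + p_i². -/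
open scoped Matrix


private lemma conj_quad {n : ℕ} (M : Matrix (Fin n) (Fin n) ℝ) (v : Fin n → ℂ) :
    star v ⬝ᵥ (M.transpose.map Complex.ofReal).mulVec v =
      starRingEnd ℂ (star v ⬝ᵥ (M.map Complex.ofReal).mulVec v) := by
  simp only [dotProduct, Matrix.mulVec, Matrix.map_apply, Matrix.transpose_apply,
    Pi.star_apply, map_sum, map_mul, Complex.conj_conj, Complex.conj_ofReal, Complex.star_def,
    Finset.mul_sum]
  rw [Finset.sum_comm]
  exact Finset.sum_congr rfl fun i _ => Finset.sum_congr rfl fun j _ => by ring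

private lemma self_dot_real {n : ℕ} (v : Fin n → ℂ) :
    (star v ⬝ᵥ v) = ((star v ⬝ᵥ v).re : ℂ) := by
  simp only [dotProduct, Pi.star_apply, Complex.star_def, Complex.conj_mul']
  simp [← Complex.ofReal_pow]

private lemma key {n : ℕ} (Ψ B : Matrix (Fin n) (Fin n) ℝ) (lam : ℂ) (v w : Fin n → ℂ)
    (hv : v ≠ 0)
    (h1 : (Ψ.map Complex.ofReal).mulVec v + (B.map Complex.ofReal).mulVec w = lam • v) :
    (lam.re - (star v ⬝ᵥ ((((2:ℝ)⁻¹ • (Ψ + Ψ.transpose)).map Complex.ofReal).mulVec v)).re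
        / (star v ⬝ᵥ v).re) ^ 2
      + (lam.im - (-Complex.I *
          (star v ⬝ᵥ ((((2:ℝ)⁻¹ • (Ψ - Ψ.transpose)).map Complex.ofReal).mulVec v))).re
        / (star v ⬝ᵥ v).re) ^ 2
    = ((star ((B.map Complex.ofReal).mulVec w) ⬝ᵥ (B.map Complex.ofReal).mulVec w).re
        - (star ((Ψ.map Complex.ofReal).mulVec v) ⬝ᵥ (Ψ.map Complex.ofReal).mulVec v).re)
        / (star v ⬝ᵥ v).re
      + ((star v ⬝ᵥ ((((2:ℝ)⁻¹ • (Ψ + Ψ.transpose)).map Complex.ofReal).mulVec v)).re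
        / (star v ⬝ᵥ v).re) ^ 2
      + ((-Complex.I *
          (star v ⬝ᵥ ((((2:ℝ)⁻¹ • (Ψ - Ψ.transpose)).map Complex.ofReal).mulVec v))).re
        / (star v ⬝ᵥ v).re) ^ 2 := by
  set q : ℂ := star v ⬝ᵥ (Ψ.map Complex.ofReal).mulVec v with hqdef
  set cr : ℝ := (star v ⬝ᵥ v).re with hcrdef
  have hc : star v ⬝ᵥ v = (cr : ℂ) := self_dot_real v
  have hsum : cr = ∑ i, Complex.normSq (v i) := by
    rw [hcrdef]
    simp [dotProduct, Complex.star_def, Complex.conj_mul', ← Complex.ofReal_pow,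
      Complex.sq_norm]
  have hc0 : cr ≠ 0 := by
    intro h
    apply hv
    funext i
    have h0 : ∑ j, Complex.normSq (v j) = 0 := by rw [← hsum, h]
    have := (Finset.sum_eq_zero_iff_of_nonneg
      (fun j _ => Complex.normSq_nonneg (v j))).mp h0 i (Finset.mem_univ i)
    exact Complex.normSq_eq_zero.mp this
  -- symmetric part
  have hmapadd : (((2:ℝ)⁻¹ • (Ψ + Ψ.transpose)).map Complex.ofReal)
      = ((2:ℂ)⁻¹) • ((Ψ.map Complex.ofReal) + (Ψ.transpose.map Complex.ofReal)) := by
    ext i j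
    simp [Matrix.map_apply]
    ring
  have hmapsub : (((2:ℝ)⁻¹ • (Ψ - Ψ.transpose)).map Complex.ofReal)
      = ((2:ℂ)⁻¹) • ((Ψ.map Complex.ofReal) - (Ψ.transpose.map Complex.ofReal)) := by
    ext i j
    simp [Matrix.map_apply]
  have hconj := conj_quad Ψ v
  have hps : (star v ⬝ᵥ ((((2:ℝ)⁻¹ • (Ψ + Ψ.transpose)).map Complex.ofReal).mulVec v)).re
      = q.re := by
    rw [hmapadd, Matrix.smul_mulVec, Matrix.add_mulVec, dotProduct_smul,
      dotProduct_add, hconj, ← hqdef, smul_eq_mul]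
    simp [Complex.mul_re, Complex.add_re, Complex.add_im]
    ring
  have hpa : (-Complex.I *
      (star v ⬝ᵥ ((((2:ℝ)⁻¹ • (Ψ - Ψ.transpose)).map Complex.ofReal).mulVec v))).re
      = q.im := by
    rw [hmapsub, Matrix.smul_mulVec, Matrix.sub_mulVec, dotProduct_smul,
      dotProduct_sub, hconj, ← hqdef, smul_eq_mul]
    simp [Complex.mul_re, Complex.mul_im, Complex.sub_re, Complex.sub_im]
    ring
  -- eigen identity
  have hBweq : (B.map Complex.ofReal).mulVec w = lam • v - (Ψ.map Complex.ofReal).mulVec v := by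
    rw [eq_sub_iff_add_eq, add_comm]
    exact h1
  have hconjq : star ((Ψ.map Complex.ofReal).mulVec v) ⬝ᵥ v = starRingEnd ℂ q := by
    rw [Matrix.star_dotProduct]
    rfl
  have hE : star ((B.map Complex.ofReal).mulVec w) ⬝ᵥ (B.map Complex.ofReal).mulVec w
      = (starRingEnd ℂ lam * lam) * (cr : ℂ) - starRingEnd ℂ lam * q - lam * starRingEnd ℂ q
        + star ((Ψ.map Complex.ofReal).mulVec v) ⬝ᵥ (Ψ.map Complex.ofReal).mulVec v := by
    rw [hBweq]
    simp only [star_sub, star_smul, sub_dotProduct, dotProduct_sub,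
      smul_dotProduct, dotProduct_smul, smul_eq_mul, hconjq, hc,
      ← hqdef, Complex.star_def]
    ring
  have hEre : (star ((B.map Complex.ofReal).mulVec w) ⬝ᵥ (B.map Complex.ofReal).mulVec w).re
      = (lam.re ^ 2 + lam.im ^ 2) * cr - 2 * (lam.re * q.re + lam.im * q.im)
        + (star ((Ψ.map Complex.ofReal).mulVec v) ⬝ᵥ (Ψ.map Complex.ofReal).mulVec v).re := by
    rw [hE]
    simp [Complex.add_re, Complex.sub_re, Complex.mul_re, Complex.mul_im]
    ring
  rw [hps, hpa, hEre]
  field_simp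
  ring

/-- Circle theorem for saddle-point matrices (Theorem 3): each eigenvalue
`λ` of `A = [[Ψ, B], [-Bᵀ, 0]]` with eigenvector `(v, w)`, `v ≠ 0`, lies on
the circle centered at `(p_r, p_i)` with radius `r`, where `p_r, p_i` are
the Rayleigh quotients of the symmetric and skew-symmetric parts of `Ψ`. -/
theorem stmt_14 {n : ℕ} (Ψ B : Matrix (Fin n) (Fin n) ℝ)
    (lam : ℂ) (v w : Fin n → ℂ) (hv : v ≠ 0)
    (heig :
      (Matrix.fromBlocks (Ψ.map Complex.ofReal) (B.map Complex.ofReal)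
          (-(B.transpose.map Complex.ofReal)) 0).mulVec (Sum.elim v w) =
        lam • Sum.elim v w) :
    let Ψs : Matrix (Fin n) (Fin n) ℝ := (2:ℝ)⁻¹ • (Ψ + Ψ.transpose)
    let Ψa : Matrix (Fin n) (Fin n) ℝ := (2:ℝ)⁻¹ • (Ψ - Ψ.transpose)
    let nv2 : ℝ := (star v ⬝ᵥ v).re
    let pr : ℝ := (star v ⬝ᵥ (Ψs.map Complex.ofReal).mulVec v).re / nv2
    let pi' : ℝ :=
      (-Complex.I * (star v ⬝ᵥ (Ψa.map Complex.ofReal).mulVec v)).re / nv2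
    let Bw : Fin n → ℂ := (B.map Complex.ofReal).mulVec w
    let Ψv : Fin n → ℂ := (Ψ.map Complex.ofReal).mulVec v
    let r2 : ℝ := ((star Bw ⬝ᵥ Bw).re - (star Ψv ⬝ᵥ Ψv).re) / nv2
      + pr ^ 2 + pi' ^ 2
    (lam.re - pr) ^ 2 + (lam.im - pi') ^ 2 = r2 := by
  intro Ψs Ψa nv2 pr pi' Bw Ψv r2
  have h1 : (Ψ.map Complex.ofReal).mulVec v + (B.map Complex.ofReal).mulVec w = lam • v := by
    rw [Matrix.fromBlocks_mulVec] at heig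
    funext i
    have := congrFun heig (Sum.inl i)
    simpa using this
  exact key Ψ B lam v w hv h1
end

section
/- Let A = [[Ψ, B],[−Bᵀ, 0]] ∈ ℝ^{2n×2n} with Ψ symmetric positive definite and B invertible. If λ ∈ ℂ is an eigenvalue of A with eigenvector (v,w), v ≠ 0, then λ satisfies the quadratic equation λ² − (v*Ψv/‖v‖²)·λ + (v*BBᵀv/‖v‖²) = 0; consequently λ is real and positive whenever (v*Ψv/‖v‖²)² ≥ 4·(v*BBᵀv/‖v‖²). -/
open scoped Matrix
open Matrix

private lemma star_dot_self' {n : ℕ} (u : Fin n → ℂ) :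
    star u ⬝ᵥ u = ((∑ i, Complex.normSq (u i) : ℝ) : ℂ) := by
  push_cast
  simp [dotProduct, Complex.normSq_eq_conj_mul_self]

private lemma sum_normSq_pos {n : ℕ} {u : Fin n → ℂ} (hu : u ≠ 0) :
    0 < ∑ i, Complex.normSq (u i) := by
  obtain ⟨i, hi⟩ := Function.ne_iff.mp hu
  exact Finset.sum_pos' (fun j _ => Complex.normSq_nonneg _)
    ⟨i, Finset.mem_univ i, Complex.normSq_pos.mpr hi⟩

private lemma key_s16 {n : ℕ} (M : Matrix (Fin n) (Fin n) ℝ) (hM : IsUnit M.det)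
    {v : Fin n → ℂ} (hv : v ≠ 0) :
    ∃ r : ℝ, 0 < r ∧
      star v ⬝ᵥ ((M * M.transpose).map Complex.ofReal).mulVec v = (r : ℂ) := by
  set Mc := M.map Complex.ofReal with hMc
  set Mtc := M.transpose.map Complex.ofReal with hMtc
  have hmap : (M * M.transpose).map Complex.ofReal = Mc * Mtc := by
    ext i j
    simp [Matrix.mul_apply, Matrix.map_apply, hMc, hMtc]
  set u := Mtc.mulVec v with hu
  have hdetu : IsUnit Mtc.det := by
    have h1 : Mtc = Complex.ofRealHom.mapMatrix M.transpose := by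
      ext i j; simp [hMtc]
    rw [h1, ← RingHom.map_det, Matrix.det_transpose]
    exact hM.map Complex.ofRealHom
  have hune : u ≠ 0 := by
    intro h0
    apply hv
    have h2 : Mtc.mulVec v = Mtc.mulVec 0 := by simp [← hu, h0]
    exact (Matrix.mulVec_injective_iff_isUnit (A := Mtc)).mpr ((Matrix.isUnit_iff_isUnit_det Mtc).mpr hdetu) h2
  have hH : Mtc.conjTranspose = Mc := by
    ext i j
    simp [Matrix.conjTranspose_apply, hMc, hMtc, Complex.conj_ofReal]
  have hstar : star v ᵥ* Mc = star u := by
    rw [hu, Matrix.star_mulVec, hH]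
  refine ⟨∑ i, Complex.normSq (u i), sum_normSq_pos hune, ?_⟩
  rw [hmap, ← Matrix.mulVec_mulVec, Matrix.dotProduct_mulVec, hstar, ← hu]
  exact star_dot_self' u

/-- Eigenvalue quadratic relation for the saddle-point matrix
`A = [[Ψ, B], [-Bᵀ, 0]]` with `Ψ` symmetric positive definite and `B`
invertible: every eigenvalue satisfies
`λ² − (v*Ψv/‖v‖²)λ + (v*BBᵀv/‖v‖²) = 0`, and it is real and positive when
the discriminant is nonnegative. -/
theorem stmt_16 {n : ℕ} (Ψ B : Matrix (Fin n) (Fin n) ℝ)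
    (hΨ : Ψ.PosDef) (hB : IsUnit B.det)
    (lam : ℂ) (v w : Fin n → ℂ) (hv : v ≠ 0)
    (heig :
      (Matrix.fromBlocks (Ψ.map Complex.ofReal) (B.map Complex.ofReal)
          (-(B.transpose.map Complex.ofReal)) 0).mulVec (Sum.elim v w) =
        lam • Sum.elim v w) :
    let nv2 : ℝ := (star v ⬝ᵥ v).re
    let a : ℂ := (star v ⬝ᵥ (Ψ.map Complex.ofReal).mulVec v) / (nv2 : ℂ)
    let b : ℂ :=
      (star v ⬝ᵥ ((B * B.transpose).map Complex.ofReal).mulVec v) / (nv2 : ℂ)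
    (lam ^ 2 - a * lam + b = 0) ∧
      (a.re ^ 2 ≥ 4 * b.re → lam.im = 0 ∧ 0 < lam.re) := by
  intro nv2 a b
  set Ψc := Ψ.map Complex.ofReal with hΨc
  set Bc := B.map Complex.ofReal with hBc
  set Btc := B.transpose.map Complex.ofReal with hBtc
  -- sqrt decomposition of Ψ
  open scoped MatrixOrder in set S := CFC.sqrt Ψ with hS
  open scoped MatrixOrder in have hS2 : S * S = Ψ := CFC.sqrt_mul_sqrt_self Ψ hΨ.posSemidef.nonneg
  have hSsym : S.transpose = S := by
    open scoped MatrixOrder in have h := (CFC.sqrt_nonneg Ψ).posSemidef.1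
    ext i j
    have := congrFun (congrFun h i) j
    simpa [Matrix.conjTranspose_apply] using this
  have hΨdet : Ψ.det ≠ 0 := ne_of_gt hΨ.det_pos
  have hSdet : IsUnit S.det := by
    rw [isUnit_iff_ne_zero]
    intro h0
    apply hΨdet
    rw [← hS2, Matrix.det_mul, h0, mul_zero]
  have hΨSS : Ψ = S * S.transpose := by rw [hSsym, hS2]
  obtain ⟨ra, hra, hα⟩ := key_s16 S hSdet hv
  rw [← hΨSS] at hα
  obtain ⟨rb, hrb, hβ⟩ := key_s16 B hB hv
  have hN : star v ⬝ᵥ v = ((∑ i, Complex.normSq (v i) : ℝ) : ℂ) := star_dot_self' v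
  set rn := ∑ i, Complex.normSq (v i) with hrn
  have hrnpos : 0 < rn := sum_normSq_pos hv
  -- extract the two block equations
  rw [Matrix.fromBlocks_mulVec] at heig
  have eq1 : Ψc.mulVec v + Bc.mulVec w = lam • v := by
    funext i
    simpa using congrFun heig (Sum.inl i)
  have eq2 : -(Btc.mulVec v) = lam • w := by
    funext i
    simpa [Matrix.neg_mulVec] using congrFun heig (Sum.inr i)
  -- vector identity
  have hmapBB : (B * B.transpose).map Complex.ofReal = Bc * Btc := by
    ext i j
    simp [Matrix.mul_apply, Matrix.map_apply, hBc, hBtc]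
  have step : lam • (Ψc.mulVec v) - ((B * B.transpose).map Complex.ofReal).mulVec v
      = (lam ^ 2) • v := by
    have h4 : ((B * B.transpose).map Complex.ofReal).mulVec v = Bc.mulVec (Btc.mulVec v) := by
      rw [hmapBB, ← Matrix.mulVec_mulVec]
    have h5 : Btc.mulVec v = -(lam • w) := by rw [← eq2]; ring_nf
    have h6 : Bc.mulVec (Btc.mulVec v) = -(lam • Bc.mulVec w) := by
      rw [h5]
      simp [Matrix.mulVec_neg, Matrix.mulVec_smul]
    have h7 := congrArg (fun z => lam • z) eq1
    simp only [smul_add, smul_smul] at h7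
    rw [h4, h6]
    rw [sub_neg_eq_add, h7, pow_two]
  have E : lam * (ra : ℂ) - (rb : ℂ) = lam ^ 2 * (rn : ℂ) := by
    have h8 := congrArg (fun z => star v ⬝ᵥ z) step
    simp only [dotProduct_sub, dotProduct_smul, smul_eq_mul, hα, hβ, hN] at h8
    rw [← h8, hΨc, hα]
  have hnv2 : nv2 = rn := by
    have : nv2 = (star v ⬝ᵥ v).re := rfl
    rw [this, hN, Complex.ofReal_re]
  have ha : a = ((ra / rn : ℝ) : ℂ) := by
    have h0 : a = (star v ⬝ᵥ Ψc.mulVec v) / (nv2 : ℂ) := rfl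
    rw [h0, hα, hnv2]; push_cast; ring
  have hb : b = ((rb / rn : ℝ) : ℂ) := by
    have h0 : b = (star v ⬝ᵥ ((B * B.transpose).map Complex.ofReal).mulVec v) / (nv2 : ℂ) := rfl
    rw [h0, hβ, hnv2]; push_cast; ring
  have hrnne : (rn : ℂ) ≠ 0 := by
    exact_mod_cast ne_of_gt hrnpos
  have hquad : lam ^ 2 - a * lam + b = 0 := by
    rw [ha, hb]
    push_cast
    field_simp
    linear_combination -E
  set A0 : ℝ := ra / rn with hA0
  set B0 : ℝ := rb / rn with hB0
  have hA0pos : 0 < A0 := div_pos hra hrnpos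
  have hB0pos : 0 < B0 := div_pos hrb hrnpos
  refine ⟨hquad, fun hdisc => ?_⟩
  have hdisc' : A0 ^ 2 ≥ 4 * B0 := by
    rw [ha, hb] at hdisc
    simpa using hdisc
  rw [ha, hb] at hquad
  set x := lam.re with hx
  set y := lam.im with hy0
  have hre := congrArg Complex.re hquad
  have him := congrArg Complex.im hquad
  simp only [pow_two, Complex.add_re, Complex.sub_re, Complex.mul_re, Complex.mul_im,
    Complex.add_im, Complex.sub_im, Complex.ofReal_re, Complex.ofReal_im, Complex.zero_re,
    Complex.zero_im, ← hx, ← hy0] at hre him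
  have hyz : y = 0 := by
    by_contra hy
    have h9 : y * (x + x - A0) = 0 := by linear_combination him
    rcases mul_eq_zero.mp h9 with h | h
    · exact hy h
    · nlinarith [mul_self_pos.mpr hy, hre, hdisc']
  refine ⟨hyz, ?_⟩
  rw [hyz] at hre
  nlinarith [hre, hA0pos, hB0pos, sq_nonneg x]
end
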